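/- Under the assumptions that each f_i is l-smooth and f is μ-strongly concave in y with κ = l/μ, the function Φ(x) := max_y f(x,y) is differentiable with ∇Φ(x) = ∇_x f(x, y*(x)), and ∇Φ is (l + κl)-Lipschitz. -/

import Mathlib

open scoped RealInnerProductSpace

noncomputable def gradx {d : ℕ}
    (f : EuclideanSpace ℝ (Fin d) → EuclideanSpace ℝ (Fin d) → ℝ)
    (x y : EuclideanSpace ℝ (Fin d)) : EuclideanSpace ℝ (Fin d) :=
  gradient (fun x' => f x' y) x

noncomputable def grady {d : ℕ}
    (f : EuclideanSpace ℝ (Fin d) → EuclideanSpace ℝ (Fin d) → ℝ)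
    (x y : EuclideanSpace ℝ (Fin d)) : EuclideanSpace ℝ (Fin d) :=
  gradient (f x) y
open InnerProductSpace

variable {E : Type*} [NormedAddCommGroup E] [InnerProductSpace ℝ E] [CompleteSpace E]

/-- averaged gradient -/
lemma hasGradientAt_const_mul_sum {n : ℕ} (c : ℝ) (g : Fin n → E → ℝ) (G : Fin n → E) (x : E)
    (h : ∀ i, HasGradientAt (g i) (G i) x) :
    HasGradientAt (fun y => c * ∑ i, g i y) (c • ∑ i, G i) x := by
  have h1 : HasFDerivAt (fun y => ∑ i, g i y) (∑ i, toDual ℝ E (G i)) x :=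
    HasFDerivAt.fun_sum (fun i _ => (h i).hasFDerivAt)
  have h2 := h1.const_mul c
  rw [hasGradientAt_iff_hasFDerivAt, map_smul, map_sum]
  exact h2

lemma quadratic_isLittleO (C : ℝ) (hC : 0 ≤ C) (x : E) (r : E → ℝ)
    (h : ∀ x', |r x'| ≤ C * ‖x' - x‖ ^ 2) :
    r =o[nhds x] fun x' => x' - x := by
  rw [Asymptotics.isLittleO_iff]
  intro ε hε
  filter_upwards [Metric.ball_mem_nhds x (show (0:ℝ) < ε / (C + 1) by positivity)] with x' hx'
  have h1 : ‖x' - x‖ < ε / (C + 1) := by rwa [Metric.mem_ball, dist_eq_norm] at hx'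
  have h2 := h x'
  have h3 : (0:ℝ) ≤ ‖x' - x‖ := norm_nonneg _
  have h5 : ‖x' - x‖ * (C + 1) < ε := (lt_div_iff₀ (by positivity)).mp h1
  have h4 : C * ‖x' - x‖ ^ 2 ≤ ε * ‖x' - x‖ := by nlinarith [mul_le_mul_of_nonneg_left h5.le h3, sq_nonneg ‖x' - x‖]
  rw [Real.norm_eq_abs]
  simpa using h2.trans h4

/-- first-order condition for concave functions -/
lemma concave_le_of_hasGradientAt (g : E → ℝ) (hg : ConcaveOn ℝ Set.univ g) (a b G : E)
    (hG : HasGradientAt g G a) : g b ≤ g a + ⟪G, b - a⟫ := by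
  set φ : ℝ → ℝ := fun t => g (a + t • (b - a)) with hφ
  have hφc : ConcaveOn ℝ Set.univ φ := by
    have h := hg.comp_affineMap (AffineMap.lineMap a b)
    have he : φ = fun t => g (AffineMap.lineMap a b t) := by
      funext t; simp [hφ, AffineMap.lineMap_apply, add_comm]
    have hs : (AffineMap.lineMap a b : ℝ →ᵃ[ℝ] E) ⁻¹' Set.univ = Set.univ := by simp
    rw [he]
    simpa [hs, Function.comp_def] using h
  have hc : HasDerivAt (fun t : ℝ => a + t • (b - a)) (b - a) 0 := by
    simpa using ((hasDerivAt_id (0:ℝ)).smul_const (b - a)).const_add a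
  have hφ' : HasDerivAt φ ⟪G, b - a⟫ 0 := by
    have hG' : HasFDerivAt g (toDual ℝ E G) (a + (0:ℝ) • (b - a)) := by
      simpa using hG.hasFDerivAt
    have h := hG'.comp_hasDerivAt 0 hc
    simpa [hφ, toDual_apply_apply, Function.comp_def] using h
  have hψ := hφc.neg
  have hψ' : HasDerivAt (-φ) (-⟪G, b - a⟫) 0 := hφ'.neg
  have hslope := hψ.le_slope_of_hasDerivAt (Set.mem_univ (0:ℝ)) (Set.mem_univ (1:ℝ))
    one_pos hψ'
  have hs1 : slope (-φ) 0 1 = -φ 1 + φ 0 := by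
    simp [slope_def_field]
  rw [hs1] at hslope
  have h0 : φ 0 = g a := by simp [hφ]
  have h1 : φ 1 = g b := by simp [hφ]
  simp only [Pi.neg_apply, h0, h1] at hslope
  linarith

lemma hasGradientAt_norm_sq (c : ℝ) (y : E) :
    HasGradientAt (fun v : E => c * ‖v‖ ^ 2) ((2 * c) • y) y := by
  rw [hasGradientAt_iff_isLittleO]
  have key : (fun y' : E => c * ‖y'‖ ^ 2 - c * ‖y‖ ^ 2 - ⟪(2 * c) • y, y' - y⟫)
      = fun y' => c * ‖y' - y‖ ^ 2 := by
    funext y'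
    have h1 : ‖y' - y‖ ^ 2 = ‖y'‖ ^ 2 - 2 * ⟪y, y'⟫ + ‖y‖ ^ 2 := by
      rw [← real_inner_self_eq_norm_sq, ← real_inner_self_eq_norm_sq,
        ← real_inner_self_eq_norm_sq, inner_sub_sub_self]
      rw [real_inner_comm y' y]; ring
    rw [real_inner_smul_left, inner_sub_right]
    rw [real_inner_self_eq_norm_sq]
    linear_combination -c * h1
  rw [key]
  exact quadratic_isLittleO |c| (abs_nonneg c) y _ (fun x' => by
    rw [abs_mul, abs_of_nonneg (by positivity : (0:ℝ) ≤ ‖x' - y‖ ^ 2)])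

set_option maxHeartbeats 1000000 in
theorem Phi_smooth_danskin {d n : ℕ} (hn : 0 < n) (l μ : ℝ) (hl : 0 < l) (hμ : 0 < μ)
    (hκ : 1 ≤ l / μ)
    (fi : Fin n → EuclideanSpace ℝ (Fin d) → EuclideanSpace ℝ (Fin d) → ℝ)
    (hdx : ∀ i y, Differentiable ℝ (fun x => fi i x y))
    (hdy : ∀ i x, Differentiable ℝ (fi i x))
    (hsmooth_x : ∀ i x₁ y₁ x₂ y₂,
      ‖gradx (fi i) x₁ y₁ - gradx (fi i) x₂ y₂‖ ≤ l * (‖x₁ - x₂‖ + ‖y₁ - y₂‖))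
    (hsmooth_y : ∀ i x₁ y₁ x₂ y₂,
      ‖grady (fi i) x₁ y₁ - grady (fi i) x₂ y₂‖ ≤ l * (‖x₁ - x₂‖ + ‖y₁ - y₂‖))
    (f : EuclideanSpace ℝ (Fin d) → EuclideanSpace ℝ (Fin d) → ℝ)
    (hf : ∀ x y, f x y = (n : ℝ)⁻¹ * ∑ i, fi i x y)
    (hconc : ∀ x, ConcaveOn ℝ Set.univ (fun y => f x y + (μ / 2) * ‖y‖ ^ 2))
    (ystar : EuclideanSpace ℝ (Fin d) → EuclideanSpace ℝ (Fin d))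
    (hmax : ∀ x, IsMaxOn (f x) Set.univ (ystar x))
    (Φ : EuclideanSpace ℝ (Fin d) → ℝ) (hΦ : ∀ x, Φ x = f x (ystar x)) :
    (∀ x, HasGradientAt Φ (gradx f x (ystar x)) x) ∧
      (∀ x₁ x₂, ‖gradient Φ x₁ - gradient Φ x₂‖ ≤ (l + (l / μ) * l) * ‖x₁ - x₂‖) := by

  have hnR : (0:ℝ) < (n:ℝ) := Nat.cast_pos.mpr hn
  set Fx : (EuclideanSpace ℝ (Fin d)) → (EuclideanSpace ℝ (Fin d)) → (EuclideanSpace ℝ (Fin d)) := fun x y => (n:ℝ)⁻¹ • ∑ i, gradx (fi i) x y with hFxdef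
  set Fy : (EuclideanSpace ℝ (Fin d)) → (EuclideanSpace ℝ (Fin d)) → (EuclideanSpace ℝ (Fin d)) := fun x y => (n:ℝ)⁻¹ • ∑ i, grady (fi i) x y with hFydef
  -- gradients of f
  have hFx : ∀ x y, HasGradientAt (fun x' => f x' y) (Fx x y) x := by
    intro x y
    have h := hasGradientAt_const_mul_sum (E := EuclideanSpace ℝ (Fin d)) (n:ℝ)⁻¹ (fun i x' => fi i x' y)
      (fun i => gradx (fi i) x y) x (fun i => ((hdx i y) x).hasGradientAt)
    have he : (fun x' => f x' y) = fun x' => (n:ℝ)⁻¹ * ∑ i, fi i x' y :=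
      funext fun x' => hf x' y
    rw [he]
    exact h
  have hFy : ∀ x y, HasGradientAt (f x) (Fy x y) y := by
    intro x y
    have h := hasGradientAt_const_mul_sum (E := EuclideanSpace ℝ (Fin d)) (n:ℝ)⁻¹ (fun i y' => fi i x y')
      (fun i => grady (fi i) x y) y (fun i => ((hdy i x) y).hasGradientAt)
    have he : f x = fun y' => (n:ℝ)⁻¹ * ∑ i, fi i x y' := funext fun y' => hf x y'
    rw [he]
    exact h
  have hgradx_eq : ∀ x y, gradx f x y = Fx x y := fun x y => (hFx x y).gradient
  -- Lipschitz bounds for averaged gradients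
  have avg_bound : ∀ (g : Fin n → (EuclideanSpace ℝ (Fin d))) (B : ℝ), (∀ i, ‖g i‖ ≤ B) →
      ‖(n:ℝ)⁻¹ • ∑ i, g i‖ ≤ B := by
    intro g B hB
    rw [norm_smul, Real.norm_eq_abs, abs_of_nonneg (by positivity)]
    have h1 : ‖∑ i, g i‖ ≤ ∑ _i : Fin n, B :=
      (norm_sum_le _ _).trans (Finset.sum_le_sum fun i _ => hB i)
    have h2 : ∑ _i : Fin n, B = (n:ℝ) * B := by
      simp [Finset.sum_const, nsmul_eq_mul]
    calc (n:ℝ)⁻¹ * ‖∑ i, g i‖ ≤ (n:ℝ)⁻¹ * ((n:ℝ) * B) := by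
          apply mul_le_mul_of_nonneg_left (h1.trans_eq h2) (by positivity)
      _ = B := by field_simp
  have hLx : ∀ x₁ y₁ x₂ y₂, ‖Fx x₁ y₁ - Fx x₂ y₂‖ ≤ l * (‖x₁ - x₂‖ + ‖y₁ - y₂‖) := by
    intro x₁ y₁ x₂ y₂
    have : Fx x₁ y₁ - Fx x₂ y₂
        = (n:ℝ)⁻¹ • ∑ i, (gradx (fi i) x₁ y₁ - gradx (fi i) x₂ y₂) := by
      rw [hFxdef]; rw [← smul_sub, ← Finset.sum_sub_distrib]
    rw [this]
    exact avg_bound _ _ (fun i => hsmooth_x i x₁ y₁ x₂ y₂)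
  have hLy : ∀ x₁ y₁ x₂ y₂, ‖Fy x₁ y₁ - Fy x₂ y₂‖ ≤ l * (‖x₁ - x₂‖ + ‖y₁ - y₂‖) := by
    intro x₁ y₁ x₂ y₂
    have : Fy x₁ y₁ - Fy x₂ y₂
        = (n:ℝ)⁻¹ • ∑ i, (grady (fi i) x₁ y₁ - grady (fi i) x₂ y₂) := by
      rw [hFydef]; rw [← smul_sub, ← Finset.sum_sub_distrib]
    rw [this]
    exact avg_bound _ _ (fun i => hsmooth_y i x₁ y₁ x₂ y₂)
  -- first order condition at the maximizer
  have hFy0 : ∀ x, Fy x (ystar x) = 0 := by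
    intro x
    have hmax' : IsLocalMax (f x) (ystar x) :=
      Filter.Eventually.of_forall (fun y => hmax x (Set.mem_univ y))
    have h0 := hmax'.hasFDerivAt_eq_zero (hFy x (ystar x)).hasFDerivAt
    have h1 := congrArg (InnerProductSpace.toDual ℝ (EuclideanSpace ℝ (Fin d))).symm h0
    simpa using h1
  -- strong monotonicity from concavity of f + (μ/2)‖·‖²
  have hstrong : ∀ x a b, μ * ‖a - b‖ ^ 2 ≤ ⟪Fy x a - Fy x b, b - a⟫ := by
    intro x a b
    have hG : ∀ c : (EuclideanSpace ℝ (Fin d)), HasGradientAt (fun y => f x y + (μ/2) * ‖y‖ ^ 2)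
        (Fy x c + μ • c) c := by
      intro c
      have h1 := (hFy x c).hasFDerivAt
      have h2 := (hasGradientAt_norm_sq (μ/2) c).hasFDerivAt
      have h3 := h1.add h2
      rw [hasGradientAt_iff_hasFDerivAt, map_add]
      have : μ • c = (2 * (μ/2)) • c := by congr 1; ring
      rw [this]
      exact h3
    have k1 := concave_le_of_hasGradientAt _ (hconc x) a b _ (hG a)
    have k2 := concave_le_of_hasGradientAt _ (hconc x) b a _ (hG b)
    have hsym : ⟪b, a⟫ = ⟪a, b⟫ := real_inner_comm a b
    have e1 : ⟪Fy x a + μ • a, b - a⟫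
        = ⟪Fy x a, b⟫ - ⟪Fy x a, a⟫ + μ * ⟪a, b⟫ - μ * ‖a‖ ^ 2 := by
      simp only [inner_add_left, inner_sub_right, real_inner_smul_left,
        real_inner_self_eq_norm_sq]
      ring
    have e2 : ⟪Fy x b + μ • b, a - b⟫
        = ⟪Fy x b, a⟫ - ⟪Fy x b, b⟫ + μ * ⟪b, a⟫ - μ * ‖b‖ ^ 2 := by
      simp only [inner_add_left, inner_sub_right, real_inner_smul_left,
        real_inner_self_eq_norm_sq]
      ring
    have e3 : ⟪Fy x a - Fy x b, b - a⟫
        = ⟪Fy x a, b⟫ - ⟪Fy x a, a⟫ - ⟪Fy x b, b⟫ + ⟪Fy x b, a⟫ := by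
      simp only [inner_sub_left, inner_sub_right]
      ring
    have e4 : ‖a - b‖ ^ 2 = ‖a‖ ^ 2 - 2 * ⟪a, b⟫ + ‖b‖ ^ 2 := by
      rw [← real_inner_self_eq_norm_sq, ← real_inner_self_eq_norm_sq,
        ← real_inner_self_eq_norm_sq, inner_sub_sub_self, real_inner_comm a b]
      ring
    rw [e1] at k1; rw [e2] at k2; rw [e3, e4]
    nlinarith [k1, k2]
  -- Lipschitzness of the maximizer
  have hystar : ∀ x₁ x₂, ‖ystar x₁ - ystar x₂‖ ≤ (l / μ) * ‖x₁ - x₂‖ := by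
    intro x₁ x₂
    set y₁ := ystar x₁
    set y₂ := ystar x₂
    have h1 := hstrong x₁ y₁ y₂
    have h2 : Fy x₁ y₁ - Fy x₁ y₂ = Fy x₂ y₂ - Fy x₁ y₂ := by
      rw [hFy0 x₁, hFy0 x₂]
    rw [h2] at h1
    have h3 : ⟪Fy x₂ y₂ - Fy x₁ y₂, y₂ - y₁⟫ ≤ ‖Fy x₂ y₂ - Fy x₁ y₂‖ * ‖y₂ - y₁‖ :=
      real_inner_le_norm _ _
    have h4 : ‖Fy x₂ y₂ - Fy x₁ y₂‖ ≤ l * ‖x₁ - x₂‖ := by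
      have := hLy x₂ y₂ x₁ y₂
      simpa [norm_sub_rev x₂ x₁] using this
    have h5 : ‖y₂ - y₁‖ = ‖y₁ - y₂‖ := norm_sub_rev _ _
    have h6 : μ * ‖y₁ - y₂‖ ^ 2 ≤ l * ‖x₁ - x₂‖ * ‖y₁ - y₂‖ := by
      calc μ * ‖y₁ - y₂‖ ^ 2 ≤ ‖Fy x₂ y₂ - Fy x₁ y₂‖ * ‖y₂ - y₁‖ := le_trans h1 h3
        _ ≤ l * ‖x₁ - x₂‖ * ‖y₁ - y₂‖ := by
            rw [h5]; exact mul_le_mul_of_nonneg_right h4 (norm_nonneg _)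
    rcases eq_or_lt_of_le (norm_nonneg (y₁ - y₂)) with h | h
    · rw [← h]
      positivity
    · rw [div_mul_eq_mul_div, le_div_iff₀ hμ]
      nlinarith [h6, h]
  -- quadratic descent-type bound in x
  have hquad : ∀ (y a b : (EuclideanSpace ℝ (Fin d))), |f b y - f a y - ⟪Fx a y, b - a⟫| ≤ l * ‖b - a‖ ^ 2 := by
    intro y a b
    set φ : (EuclideanSpace ℝ (Fin d)) → ℝ := fun x => f x y - ⟪Fx a y, x⟫ with hφdef
    have hφd : ∀ x, HasFDerivAt φ (InnerProductSpace.toDual ℝ (EuclideanSpace ℝ (Fin d)) (Fx x y - Fx a y)) x := by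
      intro x
      have h1 := (hFx x y).hasFDerivAt
      have h2 : HasFDerivAt (fun v : (EuclideanSpace ℝ (Fin d)) => ⟪Fx a y, v⟫)
          (InnerProductSpace.toDual ℝ (EuclideanSpace ℝ (Fin d)) (Fx a y)) x := by
        have h := (InnerProductSpace.toDual ℝ (EuclideanSpace ℝ (Fin d)) (Fx a y)).hasFDerivAt (x := x)
        have he : ⇑(InnerProductSpace.toDual ℝ (EuclideanSpace ℝ (Fin d)) (Fx a y)) = fun v : (EuclideanSpace ℝ (Fin d)) => ⟪Fx a y, v⟫ := by
          funext v; simp [InnerProductSpace.toDual_apply_apply]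
        rwa [he] at h
      have h3 := h1.sub h2
      rw [map_sub]
      exact h3
    have hmem_a : a ∈ Metric.closedBall a ‖b - a‖ := Metric.mem_closedBall_self (norm_nonneg _)
    have hmem_b : b ∈ Metric.closedBall a ‖b - a‖ := by
      rw [Metric.mem_closedBall, dist_eq_norm]
    have key := (convex_closedBall a ‖b - a‖).norm_image_sub_le_of_norm_hasFDerivWithin_le
      (f' := fun x => InnerProductSpace.toDual ℝ (EuclideanSpace ℝ (Fin d)) (Fx x y - Fx a y))
      (fun x _ => (hφd x).hasFDerivWithinAt)
      (fun x hx => by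
        rw [LinearIsometryEquiv.norm_map]
        have h1 := hLx x y a y
        have h2 : ‖x - a‖ ≤ ‖b - a‖ := by
          rwa [Metric.mem_closedBall, dist_eq_norm] at hx
        have h3 : l * (‖x - a‖ + ‖y - y‖) = l * ‖x - a‖ := by simp
        calc ‖Fx x y - Fx a y‖ ≤ l * ‖x - a‖ := by rw [← h3]; exact h1
          _ ≤ l * ‖b - a‖ := mul_le_mul_of_nonneg_left h2 hl.le)
      hmem_a hmem_b
    have he : φ b - φ a = f b y - f a y - ⟪Fx a y, b - a⟫ := by
      rw [hφdef]
      simp only [inner_sub_right]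
      ring
    rw [← he, ← Real.norm_eq_abs]
    calc ‖φ b - φ a‖ ≤ l * ‖b - a‖ * ‖b - a‖ := key
      _ = l * ‖b - a‖ ^ 2 := by ring
  -- main differentiability claim
  have part1 : ∀ x, HasGradientAt Φ (gradx f x (ystar x)) x := by
    intro x₁
    rw [hgradx_eq]
    rw [hasGradientAt_iff_isLittleO]
    apply quadratic_isLittleO (l + l * (l / μ)) (by positivity) x₁
    intro x₂
    set y₁ := ystar x₁
    set y₂ := ystar x₂
    have m1 : f x₂ y₁ ≤ Φ x₂ := by rw [hΦ]; exact hmax x₂ (Set.mem_univ _)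
    have m2 : f x₁ y₂ ≤ Φ x₁ := by rw [hΦ]; exact hmax x₁ (Set.mem_univ _)
    have e1 : Φ x₁ = f x₁ y₁ := hΦ x₁
    have e2 : Φ x₂ = f x₂ y₂ := hΦ x₂
    have q1 := abs_le.mp (hquad y₁ x₁ x₂)
    have q2 := abs_le.mp (hquad y₂ x₁ x₂)
    have hcross : ⟪Fx x₁ y₂, x₂ - x₁⟫ - ⟪Fx x₁ y₁, x₂ - x₁⟫
        ≤ l * (l / μ) * ‖x₂ - x₁‖ ^ 2 := by
      have h0 : ⟪Fx x₁ y₂, x₂ - x₁⟫ - ⟪Fx x₁ y₁, x₂ - x₁⟫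
          = ⟪Fx x₁ y₂ - Fx x₁ y₁, x₂ - x₁⟫ := by rw [inner_sub_left]
      rw [h0]
      have h1 : ⟪Fx x₁ y₂ - Fx x₁ y₁, x₂ - x₁⟫ ≤ ‖Fx x₁ y₂ - Fx x₁ y₁‖ * ‖x₂ - x₁‖ :=
        real_inner_le_norm _ _
      have h2 : ‖Fx x₁ y₂ - Fx x₁ y₁‖ ≤ l * ‖y₂ - y₁‖ := by
        have := hLx x₁ y₂ x₁ y₁
        simpa using this
      have h3 : ‖y₂ - y₁‖ ≤ (l / μ) * ‖x₂ - x₁‖ := hystar x₂ x₁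
      have h4 : ‖Fx x₁ y₂ - Fx x₁ y₁‖ ≤ l * ((l / μ) * ‖x₂ - x₁‖) :=
        h2.trans (mul_le_mul_of_nonneg_left h3 hl.le)
      calc ⟪Fx x₁ y₂ - Fx x₁ y₁, x₂ - x₁⟫ ≤ ‖Fx x₁ y₂ - Fx x₁ y₁‖ * ‖x₂ - x₁‖ := h1
        _ ≤ l * ((l / μ) * ‖x₂ - x₁‖) * ‖x₂ - x₁‖ :=
            mul_le_mul_of_nonneg_right h4 (norm_nonneg _)
        _ = l * (l / μ) * ‖x₂ - x₁‖ ^ 2 := by ring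
    have hlκ : 0 ≤ l * (l / μ) := by positivity
    have hnn : 0 ≤ ‖x₂ - x₁‖ ^ 2 := by positivity
    rw [abs_le]
    constructor
    · nlinarith [q1.1, m1, hnn, hlκ]
    · nlinarith [q2.2, m2, hcross, hnn]
  refine ⟨part1, ?_⟩
  intro x₁ x₂
  rw [(part1 x₁).gradient, (part1 x₂).gradient, hgradx_eq, hgradx_eq]
  have h1 := hLx x₁ (ystar x₁) x₂ (ystar x₂)
  have h2 := hystar x₁ x₂
  nlinarith [h1, h2, hl.le, norm_nonneg (x₁ - x₂)]
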